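/- Let G be a PLB graph on n ≥ 2 vertices with constant c₀, and let W = Σ_v C(deg(v), 2) denote the number of wedges of G. If the PLB exponent is γ = 3, then W ≤ C · n · log n for a constant C depending only on c₀; if the PLB exponent is γ > 3, then W ≤ C · n for a constant C depending only on c₀ and γ. -/

import Mathlib

/-- The number of vertices of `G` of degree exactly `d`. -/
noncomputable def degCount {V : Type*} [Fintype V] (G : SimpleGraph V) (d : ℕ) : ℕ :=
  {v : V | {u | G.Adj v u}.ncard = d}.ncard

/-- `G` is power-law bounded with exponent `γ` and constant `c₀` if for every `r ≥ 0`,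
`Σ_{d=2^r}^{2^(r+1)} n(d) ≤ c₀ n Σ_{d=2^r}^{2^(r+1)} d^(-γ)`. -/
def IsPLB {V : Type*} [Fintype V] (G : SimpleGraph V) (γ c₀ : ℝ) : Prop :=
  ∀ r : ℕ,
    (∑ d ∈ Finset.Icc (2 ^ r : ℕ) (2 ^ (r + 1)), (degCount G d : ℝ)) ≤
      c₀ * (Fintype.card V : ℝ) *
        ∑ d ∈ Finset.Icc (2 ^ r : ℕ) (2 ^ (r + 1)), (d : ℝ) ^ (-γ)

open Finset in
lemma sum_choose_eq {V : Type} [Fintype V] (G : SimpleGraph V) :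
    ∑ v : V, ((({u | G.Adj v u}.ncard).choose 2 : ℕ) : ℝ)
      = ∑ d ∈ Finset.range (Fintype.card V + 1),
          (degCount G d : ℝ) * ((d.choose 2 : ℕ) : ℝ) := by
  classical
  have hmaps : ∀ v ∈ (univ : Finset V),
      {u | G.Adj v u}.ncard ∈ Finset.range (Fintype.card V + 1) := by
    intro v _
    have : {u | G.Adj v u}.ncard ≤ Fintype.card V := by
      calc {u | G.Adj v u}.ncard ≤ (Set.univ : Set V).ncard :=
            Set.ncard_le_ncard (Set.subset_univ _) Set.finite_univ
        _ = Fintype.card V := by rw [Set.ncard_univ, Nat.card_eq_fintype_card]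
    simpa [Finset.mem_range, Nat.lt_succ_iff] using this
  rw [← Finset.sum_fiberwise_of_maps_to hmaps
      (fun v => ((({u | G.Adj v u}.ncard).choose 2 : ℕ) : ℝ))]
  refine Finset.sum_congr rfl fun d _ => ?_
  have h1 : ∀ v ∈ univ.filter (fun v => {u | G.Adj v u}.ncard = d),
      ((({u | G.Adj v u}.ncard).choose 2 : ℕ) : ℝ) = ((d.choose 2 : ℕ) : ℝ) := by
    intro v hv
    rw [(Finset.mem_filter.mp hv).2]
  rw [Finset.sum_congr rfl h1, Finset.sum_const, nsmul_eq_mul]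
  congr 1
  · norm_cast
    rw [degCount, Set.ncard_eq_toFinset_card', Set.toFinset_setOf]

open Finset in
lemma cover_sum (t : ℕ → ℝ) (ht : ∀ d, 0 ≤ t d) (R : ℕ) :
    ∑ d ∈ Finset.Icc 1 (2 ^ (R + 1)), t d ≤
      ∑ r ∈ Finset.range (R + 1), ∑ d ∈ Finset.Icc (2 ^ r) (2 ^ (r + 1)), t d := by
  induction R with
  | zero => simp
  | succ R ih =>
    have h1 : (1:ℕ) ≤ 2 ^ (R + 1) := Nat.one_le_two_pow
    have h2 : (2:ℕ) ^ (R + 1) ≤ 2 ^ (R + 2) := Nat.pow_le_pow_right (by norm_num) (by omega)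
    have hsplit := Finset.sum_Ioc_consecutive t (Nat.zero_le (2 ^ (R + 1))) h2
    have e1 : Finset.Icc 1 (2 ^ (R + 2)) = Finset.Ioc 0 (2 ^ (R + 2)) := by
      exact Finset.Icc_add_one_left_eq_Ioc ..
    have e2 : Finset.Icc 1 (2 ^ (R + 1)) = Finset.Ioc 0 (2 ^ (R + 1)) := by
      exact Finset.Icc_add_one_left_eq_Ioc ..
    rw [e1, ← hsplit, Finset.sum_range_succ]
    have hlast : ∑ d ∈ Finset.Ioc (2 ^ (R + 1)) (2 ^ (R + 2)), t d ≤
        ∑ d ∈ Finset.Icc (2 ^ (R + 1)) (2 ^ (R + 2)), t d := by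
      apply Finset.sum_le_sum_of_subset_of_nonneg
      · intro x hx; simp only [Finset.mem_Ioc, Finset.mem_Icc] at *; omega
      · intro i _ _; exact ht i
    have := ih
    rw [e2] at this
    linarith

open Finset in
lemma bucket_bound {V : Type} [Fintype V] (G : SimpleGraph V) (γ c₀ : ℝ)
    (hγ : 0 < γ) (hc₀ : 0 ≤ c₀) (hplb : IsPLB G γ c₀) (r : ℕ) :
    ∑ d ∈ Finset.Icc (2 ^ r : ℕ) (2 ^ (r + 1)),
        (degCount G d : ℝ) * ((d.choose 2 : ℕ) : ℝ) ≤
      8 * c₀ * (Fintype.card V : ℝ) * (2 : ℝ) ^ ((r : ℝ) * (3 - γ)) := by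
  have hx : (0:ℝ) < (2:ℝ) ^ (r:ℝ) := Real.rpow_pos_of_pos two_pos _
  set x : ℝ := (2:ℝ) ^ (r:ℝ) with hxdef
  have hc1 : ((2 ^ r : ℕ) : ℝ) = x := by
    rw [hxdef, Real.rpow_natCast]; push_cast; ring
  have hc2 : ((2 ^ (r+1) : ℕ) : ℝ) = 2 * x := by
    rw [hxdef, Real.rpow_natCast]; push_cast; ring
  have hx1 : (1:ℝ) ≤ x := by
    rw [← hc1]; exact_mod_cast Nat.one_le_two_pow
  have hchoose : ∀ d ∈ Finset.Icc (2 ^ r : ℕ) (2 ^ (r + 1)),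
      ((d.choose 2 : ℕ) : ℝ) ≤ (2*x)^2 := by
    intro d hd
    have hd2 : d ≤ 2 ^ (r+1) := (Finset.mem_Icc.mp hd).2
    have h1 : d.choose 2 ≤ d ^ 2 := by
      rw [Nat.choose_two_right]
      calc d * (d - 1) / 2 ≤ d * (d - 1) := Nat.div_le_self _ _
        _ ≤ d * d := Nat.mul_le_mul_left d (Nat.sub_le d 1)
        _ = d ^ 2 := (sq d).symm
    have h2 : (d:ℝ) ^ 2 ≤ (2*x)^2 := by
      rw [← hc2]
      have : (d:ℝ) ≤ ((2 ^ (r+1) : ℕ) : ℝ) := by exact_mod_cast hd2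
      have hd0 : (0:ℝ) ≤ (d:ℝ) := Nat.cast_nonneg d
      nlinarith
    calc ((d.choose 2 : ℕ) : ℝ) ≤ ((d ^ 2 : ℕ) : ℝ) := by exact_mod_cast h1
      _ = (d:ℝ)^2 := by push_cast; ring
      _ ≤ (2*x)^2 := h2
  have step1 : ∑ d ∈ Finset.Icc (2 ^ r : ℕ) (2 ^ (r + 1)),
      (degCount G d : ℝ) * ((d.choose 2 : ℕ) : ℝ) ≤
      (∑ d ∈ Finset.Icc (2 ^ r : ℕ) (2 ^ (r + 1)), (degCount G d : ℝ)) * (2*x)^2 := by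
    rw [Finset.sum_mul]
    exact Finset.sum_le_sum fun d hd =>
      mul_le_mul_of_nonneg_left (hchoose d hd) (Nat.cast_nonneg _)
  have hterm : ∀ d ∈ Finset.Icc (2 ^ r : ℕ) (2 ^ (r + 1)),
      (d : ℝ) ^ (-γ) ≤ x ^ (-γ) := by
    intro d hd
    have hd1 : 2 ^ r ≤ d := (Finset.mem_Icc.mp hd).1
    have : x ≤ (d:ℝ) := by rw [← hc1]; exact_mod_cast hd1
    exact Real.rpow_le_rpow_of_nonpos hx this (neg_nonpos.mpr hγ.le)
  have hcard : ((Finset.Icc (2 ^ r : ℕ) (2 ^ (r + 1))).card : ℝ) ≤ 2 * x := by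
    rw [Nat.card_Icc]
    have he : 2 ^ (r+1) + 1 - 2 ^ r = 2 ^ r + 1 := by
      have h2 : (2:ℕ) ^ (r+1) = 2 * 2 ^ r := by rw [pow_succ]; ring
      have h3 : (1:ℕ) ≤ 2 ^ r := Nat.one_le_two_pow
      omega
    rw [he, Nat.cast_add, Nat.cast_one, hc1]
    linarith
  have hsum : ∑ d ∈ Finset.Icc (2 ^ r : ℕ) (2 ^ (r + 1)), (d : ℝ) ^ (-γ) ≤
      (2 * x) * x ^ (-γ) := by
    calc ∑ d ∈ Finset.Icc (2 ^ r : ℕ) (2 ^ (r + 1)), (d : ℝ) ^ (-γ)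
        ≤ ((Finset.Icc (2 ^ r : ℕ) (2 ^ (r + 1))).card : ℝ) * x ^ (-γ) := by
          simpa using Finset.sum_le_card_nsmul _ _ _ hterm
      _ ≤ (2 * x) * x ^ (-γ) :=
          mul_le_mul_of_nonneg_right hcard (Real.rpow_nonneg hx.le _)
  have hn0 : (0:ℝ) ≤ (Fintype.card V : ℝ) := Nat.cast_nonneg _
  have hxg : (0:ℝ) ≤ x ^ (-γ) := Real.rpow_nonneg hx.le _
  have hrpow : (2 : ℝ) ^ ((r : ℝ) * (3 - γ)) = x^(3:ℕ) * x ^ (-γ) := by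
    rw [Real.rpow_mul (by norm_num : (0:ℝ) ≤ 2), ← hxdef,
       show (3:ℝ) - γ = (3:ℝ) + (-γ) by ring, Real.rpow_add hx,
       show ((3:ℝ)) = ((3:ℕ):ℝ) by norm_num, Real.rpow_natCast]
  calc ∑ d ∈ Finset.Icc (2 ^ r : ℕ) (2 ^ (r + 1)),
        (degCount G d : ℝ) * ((d.choose 2 : ℕ) : ℝ)
      ≤ (∑ d ∈ Finset.Icc (2 ^ r : ℕ) (2 ^ (r + 1)), (degCount G d : ℝ)) * (2*x)^2 := step1
    _ ≤ (c₀ * (Fintype.card V : ℝ) *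
          ∑ d ∈ Finset.Icc (2 ^ r : ℕ) (2 ^ (r + 1)), (d : ℝ) ^ (-γ)) * (2*x)^2 := by
        apply mul_le_mul_of_nonneg_right (hplb r)
        positivity
    _ ≤ (c₀ * (Fintype.card V : ℝ) * ((2 * x) * x ^ (-γ))) * (2*x)^2 := by
        apply mul_le_mul_of_nonneg_right _ (by positivity)
        apply mul_le_mul_of_nonneg_left hsum (by positivity)
    _ ≤ 8 * c₀ * (Fintype.card V : ℝ) * (2 : ℝ) ^ ((r : ℝ) * (3 - γ)) := by
        rw [hrpow]
        ring_nf
        nlinarith [mul_nonneg (mul_nonneg hc₀ hn0) hxg, sq_nonneg x]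

open Finset in
lemma master_bound {V : Type} [Fintype V] (G : SimpleGraph V) (γ c₀ : ℝ)
    (hγ : 0 < γ) (hc₀ : 0 ≤ c₀) (hn : 2 ≤ Fintype.card V) (hplb : IsPLB G γ c₀) :
    ∑ v : V, ((({u | G.Adj v u}.ncard).choose 2 : ℕ) : ℝ) ≤
      ∑ r ∈ Finset.range (Nat.log 2 (Fintype.card V) + 1),
        8 * c₀ * (Fintype.card V : ℝ) * (2 : ℝ) ^ ((r : ℝ) * (3 - γ)) := by
  set n := Fintype.card V with hn'
  set R := Nat.log 2 n with hR
  set t : ℕ → ℝ := fun d => (degCount G d : ℝ) * ((d.choose 2 : ℕ) : ℝ) with ht'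
  have ht : ∀ d, 0 ≤ t d := fun d => by positivity
  have hstep1 : ∑ d ∈ Finset.range (n + 1), t d = ∑ d ∈ Finset.Icc 1 n, t d := by
    rw [show Finset.Icc 1 n = Finset.Ioc 0 n from by exact Finset.Icc_add_one_left_eq_Ioc ..]
    refine (Finset.sum_subset ?_ ?_).symm
    · intro x hx; simp only [Finset.mem_Ioc, Finset.mem_range] at *; omega
    · intro x hx hx2
      simp only [Finset.mem_Ioc, Finset.mem_range] at *
      have hx0 : x = 0 := by omega
      subst hx0
      show (degCount G 0 : ℝ) * ((Nat.choose 0 2 : ℕ) : ℝ) = 0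
      simp
  have hnle : n ≤ 2 ^ (R + 1) := (Nat.lt_pow_succ_log_self (by norm_num) n).le
  have hstep2 : ∑ d ∈ Finset.Icc 1 n, t d ≤ ∑ d ∈ Finset.Icc 1 (2 ^ (R + 1)), t d := by
    apply Finset.sum_le_sum_of_subset_of_nonneg
    · intro x hx; simp only [Finset.mem_Icc] at *; omega
    · intro i _ _; exact ht i
  calc ∑ v : V, ((({u | G.Adj v u}.ncard).choose 2 : ℕ) : ℝ)
      = ∑ d ∈ Finset.range (n + 1), t d := sum_choose_eq G
    _ = ∑ d ∈ Finset.Icc 1 n, t d := hstep1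
    _ ≤ ∑ d ∈ Finset.Icc 1 (2 ^ (R + 1)), t d := hstep2
    _ ≤ ∑ r ∈ Finset.range (R + 1), ∑ d ∈ Finset.Icc (2 ^ r) (2 ^ (r + 1)), t d :=
        cover_sum t ht R
    _ ≤ ∑ r ∈ Finset.range (R + 1),
          8 * c₀ * (n : ℝ) * (2 : ℝ) ^ ((r : ℝ) * (3 - γ)) :=
        Finset.sum_le_sum fun r _ => bucket_bound G γ c₀ hγ hc₀ hplb r

/-- Wedge counts of PLB graphs: if the exponent is `γ = 3` then the number of wedges
is `O(n log n)`; if `γ > 3` it is `O(n)` (constants depending only on `c₀` and `γ`). -/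
theorem plb_wedge_bound (c₀ : ℝ) (hc₀ : 0 < c₀) :
    (∃ C : ℝ, 0 < C ∧
      ∀ (V : Type) [Fintype V] (G : SimpleGraph V), 2 ≤ Fintype.card V →
        IsPLB G 3 c₀ →
          (∑ v : V, ((({u | G.Adj v u}.ncard).choose 2 : ℕ) : ℝ)) ≤
            C * (Fintype.card V : ℝ) * Real.log (Fintype.card V)) ∧
    (∀ γ : ℝ, 3 < γ →
      ∃ C : ℝ, 0 < C ∧
        ∀ (V : Type) [Fintype V] (G : SimpleGraph V), 2 ≤ Fintype.card V →
          IsPLB G γ c₀ →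
            (∑ v : V, ((({u | G.Adj v u}.ncard).choose 2 : ℕ) : ℝ)) ≤
              C * (Fintype.card V : ℝ)) := by
  have hlog2 : (0:ℝ) < Real.log 2 := Real.log_pos (by norm_num)
  constructor
  · refine ⟨16 * c₀ / Real.log 2, by positivity, ?_⟩
    intro V _ G hn hplb
    set n := Fintype.card V with hn'
    set R := Nat.log 2 n with hRdef
    have hmaster := master_bound G 3 c₀ (by norm_num) hc₀.le hn hplb
    have hsimp : ∑ r ∈ Finset.range (R + 1),
        8 * c₀ * (n : ℝ) * (2 : ℝ) ^ ((r : ℝ) * (3 - 3)) = ((R:ℝ) + 1) * (8 * c₀ * n) := by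
      have : ∀ r ∈ Finset.range (R + 1),
          8 * c₀ * (n : ℝ) * (2 : ℝ) ^ ((r : ℝ) * (3 - 3)) = 8 * c₀ * (n : ℝ) := by
        intro r _
        norm_num
      rw [Finset.sum_congr rfl this, Finset.sum_const, Finset.card_range, nsmul_eq_mul]
      push_cast; ring
    have hR1 : 1 ≤ R := Nat.log_pos (by norm_num) hn
    have hpowle : (2:ℕ) ^ R ≤ n := Nat.pow_log_le_self 2 (by omega)
    have hRlog : (R : ℝ) * Real.log 2 ≤ Real.log n := by
      have h1 : ((2:ℝ)) ^ R ≤ (n : ℝ) := by exact_mod_cast hpowle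
      have := Real.log_le_log (by positivity) h1
      rwa [Real.log_pow] at this
    have hlogn : (0:ℝ) ≤ Real.log n := by
      apply Real.log_nonneg
      have : (2:ℝ) ≤ (n:ℝ) := by exact_mod_cast hn
      linarith
    have hn0 : (0:ℝ) ≤ (n:ℝ) := Nat.cast_nonneg n
    have hR2 : ((R:ℝ) + 1) ≤ 2 * R := by
      have : (1:ℝ) ≤ (R:ℝ) := by exact_mod_cast hR1
      linarith
    have hRle : (R:ℝ) ≤ Real.log n / Real.log 2 := by
      rw [le_div_iff₀ hlog2]; exact hRlog
    calc ∑ v : V, ((({u | G.Adj v u}.ncard).choose 2 : ℕ) : ℝ)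
        ≤ ((R:ℝ) + 1) * (8 * c₀ * n) := by rw [← hsimp]; exact hmaster
      _ ≤ (2 * (Real.log n / Real.log 2)) * (8 * c₀ * n) := by
          apply mul_le_mul_of_nonneg_right _ (by positivity)
          calc ((R:ℝ) + 1) ≤ 2 * R := hR2
            _ ≤ 2 * (Real.log n / Real.log 2) := by linarith
      _ = 16 * c₀ / Real.log 2 * (n:ℝ) * Real.log n := by
          field_simp; ring
  · intro γ hγ
    have hy : (0:ℝ) < (2:ℝ) ^ ((3:ℝ) - γ) := Real.rpow_pos_of_pos two_pos _
    have hy1 : (2:ℝ) ^ ((3:ℝ) - γ) < 1 :=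
      Real.rpow_lt_one_of_one_lt_of_neg (by norm_num) (by linarith)
    set y : ℝ := (2:ℝ) ^ ((3:ℝ) - γ) with hydef
    have hy2 : (0:ℝ) < 1 - y := by linarith
    refine ⟨8 * c₀ / (1 - y), by positivity, ?_⟩
    intro V _ G hn hplb
    set n := Fintype.card V with hn'
    set R := Nat.log 2 n with hRdef
    have hmaster := master_bound G γ c₀ (by linarith) hc₀.le hn hplb
    have hterm : ∀ r : ℕ, (2 : ℝ) ^ ((r : ℝ) * (3 - γ)) = y ^ r := by
      intro r
      rw [hydef, ← Real.rpow_natCast ((2:ℝ) ^ ((3:ℝ) - γ)) r,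
        ← Real.rpow_mul (by norm_num : (0:ℝ) ≤ 2)]
      ring_nf
    have hgeom : ∑ r ∈ Finset.range (R + 1), y ^ r ≤ (1 - y)⁻¹ := by
      have h := geom_sum_Ico_le_of_lt_one hy.le hy1 (m := 0) (n := R + 1)
      rw [Finset.range_eq_Ico]
      calc ∑ r ∈ Finset.Ico 0 (R + 1), y ^ r ≤ y ^ 0 / (1 - y) := h
        _ = (1 - y)⁻¹ := by rw [pow_zero, one_div]
    have hn0 : (0:ℝ) ≤ (n:ℝ) := Nat.cast_nonneg n
    calc ∑ v : V, ((({u | G.Adj v u}.ncard).choose 2 : ℕ) : ℝ)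
        ≤ ∑ r ∈ Finset.range (R + 1), 8 * c₀ * (n : ℝ) * (2 : ℝ) ^ ((r : ℝ) * (3 - γ)) :=
          hmaster
      _ = 8 * c₀ * (n:ℝ) * ∑ r ∈ Finset.range (R + 1), y ^ r := by
          rw [Finset.mul_sum]
          exact Finset.sum_congr rfl fun r _ => by rw [hterm r]
      _ ≤ 8 * c₀ * (n:ℝ) * (1 - y)⁻¹ := by
          apply mul_le_mul_of_nonneg_left hgeom (by positivity)
      _ = 8 * c₀ / (1 - y) * (n:ℝ) := by
          field_simp
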